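/- arXiv:1201.0934 — 3 statements merged into one kernel-verified Lean document; each statement's English description precedes it below -/
import Mathlib

section
/- Let f and ψ be continuous compactly supported functions ℝ^d → ℂ. Then the continuous Gabor transform 𝒢_ψf(x,w) = ∫_{ℝ^d} f(y)·conj(ψ(y−x))·e^{−2πi w·y} dy satisfies the Plancherel formula ∫_{ℝ^d} ∫_{ℝ^d} |𝒢_ψf(x,w)|² dw dx = ‖f‖₂² · ‖ψ‖₂². -/
set_option maxHeartbeats 4000000

open MeasureTheory Filter Complex
open scoped FourierTransform RealInnerProductSpace Topology

namespace GaborPlancherelAux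

variable {V : Type*} [NormedAddCommGroup V] [InnerProductSpace ℝ V]
  [FiniteDimensional ℝ V] [MeasurableSpace V] [BorelSpace V]

lemma fourier_autocorr (g : V → ℂ) (hgc : Continuous g) (hgs : HasCompactSupport g) (w : V) :
    𝓕 (fun x ↦ ∫ y, g y * (starRingEnd ℂ) (g (y - x))) w = ((‖𝓕 g w‖ ^ 2 : ℝ) : ℂ) := by
  have hgi : Integrable g := hgc.integrable_of_hasCompactSupport hgs
  have hgt : Integrable (fun t ↦ (starRingEnd ℂ) (g (-t))) := by
    have h1 : Integrable (fun t : V ↦ g (-t)) := hgi.comp_neg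
    refine ⟨RCLike.continuous_conj.comp_aestronglyMeasurable h1.1, ?_⟩
    simpa [HasFiniteIntegral] using h1.2
  have hbase : Integrable (fun p : V × V ↦ g p.2 * (starRingEnd ℂ) (g (p.2 - p.1)))
      (volume.prod volume) := by
    have := MeasureTheory.Integrable.convolution_integrand (ContinuousLinearMap.mul ℂ ℂ) hgi hgt
    simpa [neg_sub] using this
  have hphi : Integrable (fun p : V × V ↦
      cexp (↑(-2 * Real.pi * ⟪p.1, w⟫) * I) * (g p.2 * (starRingEnd ℂ) (g (p.2 - p.1))))
      (volume.prod volume) := by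
    apply hbase.bdd_mul (c := 1)
    · have hc : Continuous fun p : V × V ↦ cexp (↑(-2 * Real.pi * ⟪p.1, w⟫) * I) := by
        have h1 : Continuous fun p : V × V ↦ ⟪p.1, w⟫ :=
          continuous_fst.inner continuous_const
        exact Complex.continuous_exp.comp
          ((Complex.continuous_ofReal.comp ((continuous_const.mul h1))).mul continuous_const)
      exact hc.aestronglyMeasurable
    · exact ae_of_all _ (fun p ↦ le_of_eq (Complex.norm_exp_ofReal_mul_I _))
  calc 𝓕 (fun x ↦ ∫ y, g y * (starRingEnd ℂ) (g (y - x))) w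
      = ∫ x, ∫ y, cexp (↑(-2 * Real.pi * ⟪x, w⟫) * I) *
          (g y * (starRingEnd ℂ) (g (y - x))) := by
        rw [Real.fourier_eq']
        congr 1 with x
        rw [smul_eq_mul, ← integral_const_mul]
    _ = ∫ y, ∫ x, cexp (↑(-2 * Real.pi * ⟪x, w⟫) * I) *
          (g y * (starRingEnd ℂ) (g (y - x))) := integral_integral_swap hphi
    _ = ∫ y, (g y * cexp (↑(-2 * Real.pi * ⟪y, w⟫) * I)) *
          (starRingEnd ℂ) (𝓕 g w) := by
        congr 1 with y
        have step : ∀ x : V, cexp (↑(-2 * Real.pi * ⟪x, w⟫) * I) *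
            (g y * (starRingEnd ℂ) (g (y - x))) =
            (g y * cexp (↑(-2 * Real.pi * ⟪y, w⟫) * I)) *
              (starRingEnd ℂ) (g (y - x) * cexp (↑(-2 * Real.pi * ⟪y - x, w⟫) * I)) := by
          intro x
          have hin : ⟪y - x, w⟫ = ⟪y, w⟫ - ⟪x, w⟫ := by
            rw [inner_sub_left]
          have hconj : (starRingEnd ℂ) (cexp (↑(-2 * Real.pi * ⟪y - x, w⟫) * I)) =
              cexp (↑(2 * Real.pi * ⟪y - x, w⟫) * I) := by
            rw [← Complex.exp_conj, map_mul, Complex.conj_I, Complex.conj_ofReal]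
            push_cast
            ring_nf
          have hsplit : ((↑(-2 * Real.pi * ⟪x, w⟫) : ℂ) * I) =
              ↑(-2 * Real.pi * ⟪y, w⟫) * I + ↑(2 * Real.pi * ⟪y - x, w⟫) * I := by
            push_cast [hin]
            ring
          rw [map_mul, hconj, hsplit, Complex.exp_add]
          ring
        rw [integral_congr_ae (ae_of_all _ step), integral_const_mul, integral_conj]
        have : ∫ x, g (y - x) * cexp (↑(-2 * Real.pi * ⟪y - x, w⟫) * I) =
            ∫ u, g u * cexp (↑(-2 * Real.pi * ⟪u, w⟫) * I) :=
          integral_sub_left_eq_self (fun u ↦ g u * cexp (↑(-2 * Real.pi * ⟪u, w⟫) * I)) volume y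
        rw [this]
        congr 2
        rw [Real.fourier_eq']
        congr 1 with u
        rw [smul_eq_mul, mul_comm]
    _ = (∫ y, g y * cexp (↑(-2 * Real.pi * ⟪y, w⟫) * I)) * (starRingEnd ℂ) (𝓕 g w) := by
        rw [integral_mul_const]
    _ = 𝓕 g w * (starRingEnd ℂ) (𝓕 g w) := by
        congr 1
        rw [Real.fourier_eq']
        congr 1 with u
        rw [smul_eq_mul, mul_comm]
    _ = ((‖𝓕 g w‖ ^ 2 : ℝ) : ℂ) := by
        rw [Complex.mul_conj']
        push_cast
        ring


lemma vf_flip_eq (h : V → ℂ) (w : V) :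
    VectorFourier.fourierIntegral (Real.fourierChar) volume ((innerₗ V).flip) h w = 𝓕 h w := by
  rw [Real.fourier_eq]
  simp only [VectorFourier.fourierIntegral, LinearMap.flip_apply, innerₗ_apply_apply]
  congr 1 with v
  congr 2
  rw [real_inner_comm w v]


lemma tendsto_gauss_fourier (h : V → ℂ) (h_cont : Continuous h) (h_int : Integrable h) :
    Tendsto (fun c : ℝ ↦ ∫ w : V, cexp (-(c : ℂ)⁻¹ * (‖w‖ : ℂ) ^ 2) • 𝓕 h w)
      atTop (𝓝 (h 0)) := by
  have A := Real.tendsto_integral_gaussian_smul' h_int (h_cont.continuousAt (x := (0 : V)))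
  apply A.congr'
  filter_upwards [Ioi_mem_atTop (0 : ℝ)] with c (hc : 0 < c)
  have hb : (0 : ℝ) < ((c : ℂ)⁻¹).re := by
    simpa using inv_pos.2 hc
  have J : Integrable (fun v : V ↦ cexp (-(c : ℂ)⁻¹ * (‖v‖ : ℂ) ^ 2 +
      2 * Real.pi * I * (⟪(0 : V), v⟫ : ℝ))) :=
    GaussianFourier.integrable_cexp_neg_mul_sq_norm_add hb _ _
  have flip := VectorFourier.integral_fourierIntegral_smul_eq_flip
    (L := innerₗ V) Real.continuous_fourierChar continuous_inner J h_int
  calc ∫ w : V, (((Real.pi : ℂ) * c) ^ ((Module.finrank ℝ V : ℂ) / 2) *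
          cexp (-(Real.pi : ℂ) ^ 2 * c * (‖(0 : V) - w‖ : ℂ) ^ 2)) • h w
      = ∫ w : V, 𝓕 (fun v : V ↦ cexp (-(c : ℂ)⁻¹ * (‖v‖ : ℂ) ^ 2 +
          2 * Real.pi * I * (⟪(0 : V), v⟫ : ℝ))) w • h w := by
        congr 1 with w
        rw [fourier_gaussian_innerProductSpace' hb]
        have e1 : ((Real.pi : ℂ) / (↑c)⁻¹ : ℂ) = (Real.pi : ℂ) * c := by
          rw [div_eq_mul_inv, inv_inv]
        have e2 : (-(Real.pi : ℂ) ^ 2 * (‖(0 : V) - w‖ : ℂ) ^ 2 / (↑c)⁻¹ : ℂ) =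
            -(Real.pi : ℂ) ^ 2 * c * (‖(0 : V) - w‖ : ℂ) ^ 2 := by
          rw [div_eq_mul_inv, inv_inv]; ring
        rw [e1, e2]
    _ = ∫ w : V, cexp (-(c : ℂ)⁻¹ * (‖w‖ : ℂ) ^ 2) • 𝓕 h w := by
        refine Eq.trans (by exact flip) ?_
        congr 1 with w
        rw [vf_flip_eq]
        congr 2
        simp [inner_zero_left]

lemma integrable_of_gauss_tendsto (F : V → ℝ) (F_cont : Continuous F)
    (F_nonneg : ∀ w, 0 ≤ F w)
    (int_c : ∀ c : ℝ, 0 < c → Integrable (fun w : V ↦ Real.exp (-c⁻¹ * ‖w‖ ^ 2) * F w))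
    (L : ℝ)
    (T : Tendsto (fun c : ℝ ↦ ∫ w : V, Real.exp (-c⁻¹ * ‖w‖ ^ 2) * F w) atTop (𝓝 L)) :
    Integrable F := by
  set fseq : ℕ → V → ENNReal :=
    fun n w ↦ ENNReal.ofReal (Real.exp (-((n : ℝ) + 1)⁻¹ * ‖w‖ ^ 2) * F w) with hfseq
  have npos : ∀ n : ℕ, (0 : ℝ) < (n : ℝ) + 1 := fun n ↦ by positivity
  have hmono : ∀ w, Monotone fun n ↦ fseq n w := by
    intro w n m hnm
    apply ENNReal.ofReal_le_ofReal
    apply mul_le_mul_of_nonneg_right _ (F_nonneg w)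
    apply Real.exp_le_exp.2
    have h1 : ((m : ℝ) + 1)⁻¹ ≤ ((n : ℝ) + 1)⁻¹ := by
      apply inv_anti₀ (npos n)
      exact_mod_cast add_le_add_left (Nat.cast_le.2 hnm) 1
    nlinarith [sq_nonneg ‖w‖, norm_nonneg w]
  have htend : ∀ w, Tendsto (fun n ↦ fseq n w) atTop (𝓝 (ENNReal.ofReal (F w))) := by
    intro w
    apply ENNReal.continuous_ofReal.continuousAt.tendsto.comp
    have h1 : Tendsto (fun n : ℕ ↦ ((n : ℝ) + 1)⁻¹) atTop (𝓝 0) := by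
      apply Tendsto.inv_tendsto_atTop
      exact tendsto_atTop_add_const_right atTop 1 tendsto_natCast_atTop_atTop
    have h2 : Tendsto (fun n : ℕ ↦ Real.exp (-((n : ℝ) + 1)⁻¹ * ‖w‖ ^ 2) * F w) atTop
        (𝓝 (Real.exp (-0 * ‖w‖ ^ 2) * F w)) := by
      apply Tendsto.mul_const
      exact (Real.continuous_exp.continuousAt.tendsto.comp
        (((h1.neg).mul_const _)))
    simpa using h2
  have meas_n : ∀ n : ℕ, AEMeasurable (fseq n) volume := by
    intro n
    apply (ENNReal.continuous_ofReal.comp ((by fun_prop : Continuous fun w : V ↦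
      Real.exp (-((n : ℝ) + 1)⁻¹ * ‖w‖ ^ 2)).mul F_cont)).measurable.aemeasurable
  have hlim : Tendsto (fun n ↦ ∫⁻ w, fseq n w) atTop (𝓝 (∫⁻ w, ENNReal.ofReal (F w))) :=
    lintegral_tendsto_of_tendsto_of_monotone meas_n (ae_of_all _ hmono) (ae_of_all _ htend)
  have eq_n : ∀ n : ℕ, ∫⁻ w, fseq n w =
      ENNReal.ofReal (∫ w : V, Real.exp (-((n : ℝ) + 1)⁻¹ * ‖w‖ ^ 2) * F w) := by
    intro n
    rw [ofReal_integral_eq_lintegral_ofReal (int_c _ (npos n))]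
    filter_upwards with w
    have := F_nonneg w
    positivity
  have hlim2 : Tendsto (fun n : ℕ ↦ ∫⁻ w, fseq n w) atTop (𝓝 (ENNReal.ofReal L)) := by
    have hcomp : Tendsto (fun n : ℕ ↦ (n : ℝ) + 1) atTop atTop :=
      tendsto_atTop_add_const_right atTop 1 tendsto_natCast_atTop_atTop
    have := (ENNReal.continuous_ofReal.continuousAt.tendsto.comp (T.comp hcomp))
    apply this.congr
    intro n
    simp only [Function.comp_apply, eq_n n]
  have lint_eq : ∫⁻ w, ENNReal.ofReal (F w) = ENNReal.ofReal L :=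
    tendsto_nhds_unique hlim hlim2
  refine ⟨F_cont.aestronglyMeasurable, ?_⟩
  rw [hasFiniteIntegral_iff_ofReal (ae_of_all _ F_nonneg), lint_eq]
  exact ENNReal.ofReal_lt_top

lemma plancherel_cc (g : V → ℂ) (hgc : Continuous g) (hgs : HasCompactSupport g) :
    ∫ w : V, ‖𝓕 g w‖ ^ 2 = ∫ y : V, ‖g y‖ ^ 2 := by
  have hgi : Integrable g := hgc.integrable_of_hasCompactSupport hgs
  set gt : V → ℂ := fun t ↦ (starRingEnd ℂ) (g (-t)) with hgt_def
  have hgtc : Continuous gt := RCLike.continuous_conj.comp (hgc.comp continuous_neg)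
  have hgts : HasCompactSupport gt := by
    have h1 : HasCompactSupport (g ∘ (Homeomorph.neg V)) :=
      hgs.comp_homeomorph (Homeomorph.neg V)
    exact h1.comp_left (map_zero (starRingEnd ℂ))
  set h : V → ℂ := convolution g gt (ContinuousLinearMap.mul ℂ ℂ) volume with hh_def
  have h_eq : h = fun x ↦ ∫ y, g y * (starRingEnd ℂ) (g (y - x)) := by
    funext x
    simp only [hh_def, convolution_def, ContinuousLinearMap.mul_apply', hgt_def, neg_sub]
  have h_cont : Continuous h :=
    HasCompactSupport.continuous_convolution_right _ hgts hgc.locallyIntegrable hgtc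
  have h_supp : HasCompactSupport h :=
    HasCompactSupport.convolution _ hgs hgts
  have h_int : Integrable h := h_cont.integrable_of_hasCompactSupport h_supp
  set F : V → ℝ := fun w ↦ ‖𝓕 g w‖ ^ 2 with hF_def
  have hFh : ∀ w, 𝓕 h w = ((F w : ℝ) : ℂ) := by
    intro w
    rw [h_eq]
    exact fourier_autocorr g hgc hgs w
  have h0 : h 0 = ((∫ y : V, ‖g y‖ ^ 2 : ℝ) : ℂ) := by
    rw [h_eq]
    simp only [sub_zero]
    simp_rw [Complex.mul_conj', ← Complex.ofReal_pow]
    exact integral_ofReal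
  have T1' : Tendsto (fun c : ℝ ↦ ∫ w : V, cexp (-(c : ℂ)⁻¹ * (‖w‖ : ℂ) ^ 2) • ((F w : ℝ) : ℂ))
      atTop (𝓝 (h 0)) := by
    apply (tendsto_gauss_fourier h h_cont h_int).congr
    intro c
    congr 1 with w
    rw [hFh]
  have RealI : ∀ c : ℝ, (∫ w : V, cexp (-(c : ℂ)⁻¹ * (‖w‖ : ℂ) ^ 2) • ((F w : ℝ) : ℂ)) =
      ((∫ w : V, Real.exp (-c⁻¹ * ‖w‖ ^ 2) * F w : ℝ) : ℂ) := by
    intro c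
    refine Eq.trans ?_ integral_ofReal
    congr 1 with w
    rw [smul_eq_mul, show (-(c : ℂ)⁻¹ * (‖w‖ : ℂ) ^ 2) = ((-c⁻¹ * ‖w‖ ^ 2 : ℝ) : ℂ) by
      push_cast; ring, ← Complex.ofReal_exp, ← Complex.ofReal_mul]
    rfl
  have T2 : Tendsto (fun c : ℝ ↦ ∫ w : V, Real.exp (-c⁻¹ * ‖w‖ ^ 2) * F w)
      atTop (𝓝 (h 0).re) := by
    have := (Complex.continuous_re.tendsto (h 0)).comp T1'
    apply this.congr
    intro c
    simp only [Function.comp_apply, RealI c, Complex.ofReal_re]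
  have F_cont : Continuous F := by
    have : Continuous (𝓕 g) :=
      VectorFourier.fourierIntegral_continuous Real.continuous_fourierChar continuous_inner hgi
    exact (this.norm).pow 2
  have F_nonneg : ∀ w, 0 ≤ F w := fun w ↦ by positivity
  have F_bd : ∀ w, ‖F w‖ ≤ (∫ v : V, ‖g v‖) ^ 2 := by
    intro w
    rw [Real.norm_eq_abs, _root_.abs_of_nonneg (F_nonneg w)]
    have := VectorFourier.norm_fourierIntegral_le_integral_norm Real.fourierChar volume
      (innerₗ V) g w
    exact pow_le_pow_left₀ (norm_nonneg _) this 2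
  have gauss_int : ∀ c : ℝ, 0 < c → Integrable (fun w : V ↦ Real.exp (-c⁻¹ * ‖w‖ ^ 2)) := by
    intro c hc
    have hb : (0 : ℝ) < ((c : ℂ)⁻¹).re := by simpa using inv_pos.2 hc
    have J : Integrable (fun v : V ↦ cexp (-(c : ℂ)⁻¹ * (‖v‖ : ℂ) ^ 2 +
        2 * Real.pi * I * (⟪(0 : V), v⟫ : ℝ))) :=
      GaussianFourier.integrable_cexp_neg_mul_sq_norm_add hb _ _
    have := J.norm
    apply this.congr
    filter_upwards with v
    simp [Complex.norm_exp, ← Complex.ofReal_pow]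
  have int_c : ∀ c : ℝ, 0 < c → Integrable (fun w : V ↦ Real.exp (-c⁻¹ * ‖w‖ ^ 2) * F w) := by
    intro c hc
    have := (gauss_int c hc).bdd_mul F_cont.aestronglyMeasurable (ae_of_all _ F_bd)
    apply this.congr
    filter_upwards with w
    ring
  have F_int : Integrable F :=
    integrable_of_gauss_tendsto F F_cont F_nonneg int_c _ T2
  have T3 : Tendsto (fun c : ℝ ↦ ∫ w : V, cexp (-(c : ℂ)⁻¹ * (‖w‖ : ℂ) ^ 2) • ((F w : ℝ) : ℂ))
      atTop (𝓝 (∫ w : V, ((F w : ℝ) : ℂ))) := by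
    have := Real.tendsto_integral_cexp_sq_smul (f := fun w : V ↦ ((F w : ℝ) : ℂ))
      (F_int.ofReal (𝕜 := ℂ))
    simp only [Complex.ofReal_inv] at this
    exact this
  have key : (∫ w : V, ((F w : ℝ) : ℂ)) = h 0 := tendsto_nhds_unique T3 T1'
  have key2 : ((∫ w : V, F w : ℝ) : ℂ) = ((∫ y : V, ‖g y‖ ^ 2 : ℝ) : ℂ) := by
    rw [← h0, ← key]
    exact integral_ofReal.symm
  exact_mod_cast key2

end GaborPlancherelAux

/-- For continuous compactly supported `f, ψ : ℝ^d → ℂ`, the continuous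
Gabor transform `𝒢_ψf(x,w) = ∫ f(y)·conj(ψ(y−x))·e^{−2πi w·y} dy` satisfies the Plancherel
formula `∫∫ |𝒢_ψf(x,w)|² dw dx = ‖f‖₂² · ‖ψ‖₂²`. -/
theorem gabor_plancherel_euclidean {d : ℕ}
    (f ψ : EuclideanSpace ℝ (Fin d) → ℂ)
    (hf_cont : Continuous f) (hf_supp : HasCompactSupport f)
    (hψ_cont : Continuous ψ) (hψ_supp : HasCompactSupport ψ) :
    ∫ x : EuclideanSpace ℝ (Fin d), ∫ w : EuclideanSpace ℝ (Fin d),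
        ‖∫ y : EuclideanSpace ℝ (Fin d),
            f y * (starRingEnd ℂ) (ψ (y - x)) *
              Complex.exp (-(2 * Real.pi * Complex.I) * (⟪w, y⟫ : ℝ))‖ ^ 2 =
      (∫ y : EuclideanSpace ℝ (Fin d), ‖f y‖ ^ 2) *
        (∫ y : EuclideanSpace ℝ (Fin d), ‖ψ y‖ ^ 2) := by
  open scoped FourierTransform in
  have step1 : ∀ x : EuclideanSpace ℝ (Fin d), ∫ w : EuclideanSpace ℝ (Fin d),
      ‖∫ y : EuclideanSpace ℝ (Fin d), f y * (starRingEnd ℂ) (ψ (y - x)) *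
          Complex.exp (-(2 * Real.pi * Complex.I) * (⟪w, y⟫ : ℝ))‖ ^ 2 =
      ∫ y : EuclideanSpace ℝ (Fin d), ‖f y‖ ^ 2 * ‖ψ (y - x)‖ ^ 2 := by
    intro x
    set g : EuclideanSpace ℝ (Fin d) → ℂ := fun y ↦ f y * (starRingEnd ℂ) (ψ (y - x)) with hg_def
    have hgc : Continuous g := by
      apply hf_cont.mul
      exact RCLike.continuous_conj.comp (hψ_cont.comp (continuous_id.sub continuous_const))
    have hgs : HasCompactSupport g := hf_supp.mul_right
    have heq : ∀ w : EuclideanSpace ℝ (Fin d), (∫ y : EuclideanSpace ℝ (Fin d), f y * (starRingEnd ℂ) (ψ (y - x)) *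
        Complex.exp (-(2 * Real.pi * Complex.I) * (⟪w, y⟫ : ℝ))) = 𝓕 g w := by
      intro w
      rw [Real.fourier_eq']
      congr 1 with y
      rw [smul_eq_mul, mul_comm]
      congr 1
      congr 1
      rw [real_inner_comm]
      push_cast
      ring
    calc ∫ w : EuclideanSpace ℝ (Fin d), ‖∫ y : EuclideanSpace ℝ (Fin d), f y * (starRingEnd ℂ) (ψ (y - x)) *
            Complex.exp (-(2 * Real.pi * Complex.I) * (⟪w, y⟫ : ℝ))‖ ^ 2
        = ∫ w : EuclideanSpace ℝ (Fin d), ‖𝓕 g w‖ ^ 2 := by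
          congr 1 with w
          rw [heq w]
      _ = ∫ y : EuclideanSpace ℝ (Fin d), ‖g y‖ ^ 2 := GaborPlancherelAux.plancherel_cc g hgc hgs
      _ = ∫ y : EuclideanSpace ℝ (Fin d), ‖f y‖ ^ 2 * ‖ψ (y - x)‖ ^ 2 := by
          congr 1 with y
          rw [hg_def]
          simp [norm_mul, mul_pow]
  calc ∫ x : EuclideanSpace ℝ (Fin d), ∫ w : EuclideanSpace ℝ (Fin d),
        ‖∫ y : EuclideanSpace ℝ (Fin d), f y * (starRingEnd ℂ) (ψ (y - x)) *
            Complex.exp (-(2 * Real.pi * Complex.I) * (⟪w, y⟫ : ℝ))‖ ^ 2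
      = ∫ x : EuclideanSpace ℝ (Fin d), ∫ y : EuclideanSpace ℝ (Fin d), ‖f y‖ ^ 2 * ‖ψ (y - x)‖ ^ 2 := by
        congr 1 with x
        exact step1 x
    _ = ∫ y : EuclideanSpace ℝ (Fin d), ∫ x : EuclideanSpace ℝ (Fin d), ‖f y‖ ^ 2 * ‖ψ (y - x)‖ ^ 2 := by
        apply integral_integral_swap
        have hf2 : Integrable (fun y : EuclideanSpace ℝ (Fin d) ↦ ‖f y‖ ^ 2) :=
          ((hf_cont.norm).pow 2).integrable_of_hasCompactSupport
            (by have h := hf_supp.comp_left (g := fun z : ℂ ↦ ‖z‖ ^ 2) (by simp); exact h)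
        have hψ2 : Integrable (fun t : EuclideanSpace ℝ (Fin d) ↦ ‖ψ (-t)‖ ^ 2) := by
          have : Continuous (fun t : EuclideanSpace ℝ (Fin d) ↦ ‖ψ (-t)‖ ^ 2) := by fun_prop
          apply this.integrable_of_hasCompactSupport
          have h1 : HasCompactSupport (ψ ∘ (Homeomorph.neg (EuclideanSpace ℝ (Fin d)))) :=
            hψ_supp.comp_homeomorph (Homeomorph.neg (EuclideanSpace ℝ (Fin d)))
          have h2 : HasCompactSupport fun t : EuclideanSpace ℝ (Fin d) ↦ ψ (-t) := h1
          exact h2.comp_left (g := fun z : ℂ ↦ ‖z‖ ^ 2) (by simp)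
        have := MeasureTheory.Integrable.convolution_integrand
          (ContinuousLinearMap.mul ℝ ℝ) hf2 hψ2
        simpa [Function.uncurry_def, neg_sub] using this
    _ = ∫ y : EuclideanSpace ℝ (Fin d), ‖f y‖ ^ 2 * ∫ x : EuclideanSpace ℝ (Fin d), ‖ψ (y - x)‖ ^ 2 := by
        congr 1 with y
        exact integral_const_mul _ _
    _ = ∫ y : EuclideanSpace ℝ (Fin d), ‖f y‖ ^ 2 * ∫ t : EuclideanSpace ℝ (Fin d), ‖ψ t‖ ^ 2 := by
        congr 1 with y
        congr 1
        exact integral_sub_left_eq_self (fun t : EuclideanSpace ℝ (Fin d) ↦ ‖ψ t‖ ^ 2) volume y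
    _ = (∫ y : EuclideanSpace ℝ (Fin d), ‖f y‖ ^ 2) * (∫ y : EuclideanSpace ℝ (Fin d), ‖ψ y‖ ^ 2) := by
        exact integral_mul_const _ _
end

section
/- Let f, g, ψ, φ be continuous compactly supported functions ℝ^d → ℂ. Then the continuous Gabor transforms satisfy the orthogonality relation ∫_{ℝ^d} ∫_{ℝ^d} 𝒢_ψf(x,w)·conj(𝒢_φg(x,w)) dw dx = ⟨φ,ψ⟩ · ⟨f,g⟩, where ⟨f,g⟩ = ∫_{ℝ^d} f(y)·conj(g(y)) dy. -/
open MeasureTheory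
open scoped RealInnerProductSpace

open Complex Filter Real
open scoped FourierTransform Convolution Topology Pointwise

section Aux

variable {V : Type*} [NormedAddCommGroup V] [InnerProductSpace ℝ V]
  [MeasurableSpace V] [BorelSpace V] [FiniteDimensional ℝ V]

lemma fourier_conj (g : V → ℂ) (w : V) :
    (starRingEnd ℂ) (𝓕 g w) = 𝓕 (fun y => (starRingEnd ℂ) (g (-y))) w := by
  rw [Real.fourier_eq', Real.fourier_eq', ← integral_conj,
    ← integral_neg_eq_self]
  congr 1 with v
  simp only [smul_eq_mul, map_mul, neg_neg, ← Complex.exp_conj, inner_neg_left]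
  rw [Complex.conj_I, Complex.conj_ofReal]
  congr 2
  push_cast
  ring

lemma mult_formula {f g : V → ℂ} (hf : Integrable f) (hg : Integrable g) :
    ∫ w, 𝓕 f w * g w = ∫ x, f x * 𝓕 g x := by
  have := VectorFourier.integral_fourierIntegral_smul_eq_flip (L := innerₗ V)
    Real.continuous_fourierChar continuous_inner hf hg
  simpa [smul_eq_mul] using! this

lemma fourier_convolution {f g : V → ℂ} (hf : Integrable f) (hg : Integrable g)
    (hfc : Continuous f) (hgc : Continuous g) (w : V) :
    𝓕 (f ⋆[ContinuousLinearMap.mul ℂ ℂ] g) w = 𝓕 f w * 𝓕 g w := by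
  have key : Integrable (fun p : V × V =>
      cexp (↑(-2 * π * ⟪p.1, w⟫) * I) * (f p.2 * g (p.1 - p.2))) (volume.prod volume) := by
    have h1 : Integrable (fun p : V × V =>
        (ContinuousLinearMap.mul ℂ ℂ) (f p.2) (g (p.1 - p.2))) (volume.prod volume) :=
      hf.convolution_integrand (ContinuousLinearMap.mul ℂ ℂ) hg
    apply h1.norm.mono'
    · apply Continuous.aestronglyMeasurable
      apply Continuous.mul
      · apply Complex.continuous_exp.comp
        exact (Complex.continuous_ofReal.comp ((continuous_const.mul
          (continuous_inner.comp (continuous_fst.prodMk continuous_const))))).mul continuous_const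
      · exact (hfc.comp continuous_snd).mul (hgc.comp (continuous_fst.sub continuous_snd))
    · filter_upwards with p
      simp only [ContinuousLinearMap.mul_apply', norm_mul]
      have : ‖cexp (↑(-2 * π * ⟪p.1, w⟫) * I)‖ = 1 := by
        rw [Complex.norm_exp]
        simp
      rw [this, one_mul]
  calc 𝓕 (f ⋆[ContinuousLinearMap.mul ℂ ℂ] g) w
      = ∫ y, ∫ t, cexp (↑(-2 * π * ⟪y, w⟫) * I) * (f t * g (y - t)) := by
        rw [Real.fourier_eq']
        congr 1 with y
        rw [convolution_def, smul_eq_mul, ← integral_const_mul]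
        simp [ContinuousLinearMap.mul_apply']
    _ = ∫ t, ∫ y, cexp (↑(-2 * π * ⟪y, w⟫) * I) * (f t * g (y - t)) :=
        integral_integral_swap key
    _ = ∫ t, ∫ y, cexp (↑(-2 * π * ⟪y + t, w⟫) * I) * (f t * g y) := by
        congr 1 with t
        rw [← integral_add_right_eq_self
          (fun y => cexp (↑(-2 * π * ⟪y, w⟫) * I) * (f t * g (y - t))) t]
        simp only [add_sub_cancel_right]
    _ = ∫ t, (cexp (↑(-2 * π * ⟪t, w⟫) * I) * f t) * ∫ y, cexp (↑(-2 * π * ⟪y, w⟫) * I) * g y := by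
        congr 1 with t
        rw [← integral_const_mul]
        congr 1 with y
        rw [inner_add_left]
        push_cast
        rw [mul_add, add_mul, Complex.exp_add]
        ring
    _ = 𝓕 f w * 𝓕 g w := by
        rw [Real.fourier_eq', Real.fourier_eq']
        rw [← integral_mul_const]
        simp [smul_eq_mul]

lemma integrable_rexp_gauss {a : ℝ} (ha : 0 < a) :
    Integrable (fun v : V => Real.exp (-a * ‖v‖ ^ 2)) := by
  have h := (GaussianFourier.integrable_cexp_neg_mul_sq_norm_add (V := V)
    (b := (a : ℂ)) (by simpa using ha) 0 (0 : V)).norm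
  apply h.congr
  filter_upwards with v
  simp [Complex.norm_exp, ← Complex.ofReal_pow]

lemma integrable_cgauss {c : ℝ} (hc : 0 < c) :
    Integrable (fun w : V => cexp (-(c : ℂ)⁻¹ * ‖w‖ ^ 2)) := by
  have h := GaussianFourier.integrable_cexp_neg_mul_sq_norm_add (V := V)
    (b := (c : ℂ)⁻¹) (by simpa using inv_pos.2 hc) 0 (0 : V)
  apply h.congr
  filter_upwards with v
  simp

lemma damped_eq {k : V → ℂ} (hki : Integrable k) {c : ℝ} (hc : 0 < c) :
    ∫ w : V, cexp (-(c : ℂ)⁻¹ * ‖w‖ ^ 2) * 𝓕 k w =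
      ∫ x : V, ((π * c : ℂ) ^ (Module.finrank ℝ V / 2 : ℂ) *
        cexp (-(π : ℂ) ^ 2 * c * ‖(0 : V) - x‖ ^ 2)) • k x := by
  have hb : (0:ℝ) < ((c : ℂ)⁻¹).re := by simpa using inv_pos.2 hc
  rw [show (∫ w : V, cexp (-(c : ℂ)⁻¹ * ‖w‖ ^ 2) * 𝓕 k w)
      = ∫ w : V, 𝓕 k w * cexp (-(c : ℂ)⁻¹ * ‖w‖ ^ 2) by simp_rw [mul_comm]]
  rw [mult_formula hki (integrable_cgauss hc)]
  congr 1 with x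
  have hc' : (c : ℂ) ≠ 0 := Complex.ofReal_ne_zero.2 hc.ne'
  rw [fourier_gaussian_innerProductSpace hb x, smul_eq_mul, zero_sub, norm_neg]
  rw [show ((π : ℂ) / ((c : ℂ))⁻¹ : ℂ) = ((π : ℂ) * c : ℂ) by field_simp,
    show -(π:ℂ)^2 * (‖x‖:ℂ)^2 / ((c:ℂ))⁻¹ = -(π:ℂ)^2 * c * (‖x‖:ℂ)^2 by field_simp]
  ring

lemma fourier_bound {f : V → ℂ} (w : V) :
    ‖𝓕 f w‖ ≤ ∫ v, ‖f v‖ :=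
  VectorFourier.norm_fourierIntegral_le_integral_norm _ _ _ _ _

lemma fourier_continuous {f : V → ℂ} (hfi : Integrable f) : Continuous (𝓕 f) :=
  VectorFourier.fourierIntegral_continuous Real.continuous_fourierChar continuous_inner hfi

lemma integrable_norm_sq_fourier {f : V → ℂ} (hfc : Continuous f)
    (hfs : HasCompactSupport f) : Integrable (fun w : V => (‖𝓕 f w‖ ^ 2 : ℝ)) := by
  have hfi : Integrable f := hfc.integrable_of_hasCompactSupport hfs
  set ft : V → ℂ := fun y => (starRingEnd ℂ) (f (-y)) with hft
  have hftc : Continuous ft := Complex.continuous_conj.comp (hfc.comp continuous_neg)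
  have hfts : HasCompactSupport ft :=
    (hfs.comp_left (map_zero _)).comp_homeomorph (Homeomorph.neg V)
  have hfti : Integrable ft := hftc.integrable_of_hasCompactSupport hfts
  set k := f ⋆[ContinuousLinearMap.mul ℂ ℂ] ft with hk
  have hki : Integrable k := hfi.integrable_convolution _ hfti
  have hkc : Continuous k :=
    hfts.continuous_convolution_right _ hfi.locallyIntegrable hftc
  have hFk : ∀ w, 𝓕 k w = ((‖𝓕 f w‖ ^ 2 : ℝ) : ℂ) := by
    intro w
    rw [hk, fourier_convolution hfi hfti hfc hftc, ← fourier_conj, Complex.mul_conj,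
      Complex.normSq_eq_norm_sq]
  -- the gaussian-convolved integrals converge to k 0
  have main : Tendsto (fun c : ℝ => ∫ x : V, ((π * c : ℂ) ^ (Module.finrank ℝ V / 2 : ℂ) *
      cexp (-(π:ℂ) ^ 2 * c * ‖(0:V) - x‖ ^ 2)) • k x) atTop (𝓝 (k 0)) :=
    Real.tendsto_integral_gaussian_smul' hki hkc.continuousAt
  -- real damped integrals
  set I : ℝ → ℝ := fun c => ∫ w : V, Real.exp (-c⁻¹ * ‖w‖ ^ 2) * ‖𝓕 f w‖ ^ 2 with hI
  have hIeq : ∀ᶠ c : ℝ in atTop, ((I c : ℝ) : ℂ) =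
      ∫ x : V, ((π * c : ℂ) ^ (Module.finrank ℝ V / 2 : ℂ) *
        cexp (-(π:ℂ) ^ 2 * c * ‖(0:V) - x‖ ^ 2)) • k x := by
    filter_upwards [Ioi_mem_atTop 0] with c (hc : 0 < c)
    rw [← damped_eq hki hc,
      show ((I c : ℝ) : ℂ) = ∫ w : V, ((Real.exp (-c⁻¹ * ‖w‖ ^ 2) * ‖𝓕 f w‖ ^ 2 : ℝ) : ℂ)
        from integral_ofReal.symm]
    congr 1 with w
    rw [hFk w]
    push_cast [Complex.ofReal_exp]
    ring
  have hIlim : Tendsto (fun c => ((I c : ℝ) : ℂ)) atTop (𝓝 (k 0)) :=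
    main.congr' (hIeq.mono fun c h => h.symm)
  have hIlim' : Tendsto I atTop (𝓝 (k 0).re) := by
    have := (Complex.continuous_re.tendsto _).comp hIlim
    exact this
  -- monotone convergence
  have hGc : Continuous (𝓕 f) := fourier_continuous hfi
  have hcont : ∀ a : ℝ, Continuous fun w : V => Real.exp (-a * ‖w‖ ^ 2) * ‖𝓕 f w‖ ^ 2 :=
    fun a => (Real.continuous_exp.comp ((continuous_const.mul (continuous_norm.pow 2)))).mul
      (hGc.norm.pow 2)
  have hexp_int : ∀ c : ℝ, 0 < c → Integrable (fun w : V =>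
      Real.exp (-c⁻¹ * ‖w‖ ^ 2) * ‖𝓕 f w‖ ^ 2) := by
    intro c hc
    have hM : ∀ w : V, ‖𝓕 f w‖ ≤ ∫ v, ‖f v‖ := fun w => fourier_bound w
    apply ((integrable_rexp_gauss (inv_pos.2 hc)).mul_const ((∫ v, ‖f v‖) ^ 2)).mono'
    · exact (hcont c⁻¹).aestronglyMeasurable
    · filter_upwards with w
      have h1 : (0:ℝ) ≤ Real.exp (-c⁻¹ * ‖w‖ ^ 2) := (Real.exp_pos _).le
      have h2 : ‖𝓕 f w‖ ^ 2 ≤ (∫ v, ‖f v‖) ^ 2 := by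
        apply pow_le_pow_left₀ (norm_nonneg _) (hM w)
      rw [Real.norm_of_nonneg (by positivity)]
      exact mul_le_mul_of_nonneg_left h2 h1
  have key : (∫⁻ w : V, ENNReal.ofReal (‖𝓕 f w‖ ^ 2)) = ENNReal.ofReal (k 0).re := by
    have hmc := lintegral_tendsto_of_tendsto_of_monotone (μ := (volume : Measure V))
      (f := fun (n : ℕ) (w : V) => ENNReal.ofReal (Real.exp (-((n:ℝ)+1)⁻¹ * ‖w‖ ^ 2) * ‖𝓕 f w‖ ^ 2))
      (F := fun w : V => ENNReal.ofReal (‖𝓕 f w‖ ^ 2))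
      (fun n => (ENNReal.measurable_ofReal.comp_aemeasurable
        ((hcont ((n:ℝ)+1)⁻¹).aemeasurable)))
      (by
        filter_upwards with w
        intro m n hmn
        apply ENNReal.ofReal_le_ofReal
        apply mul_le_mul_of_nonneg_right _ (by positivity)
        apply Real.exp_le_exp.2
        have : ((n:ℝ)+1)⁻¹ ≤ ((m:ℝ)+1)⁻¹ := by
          apply inv_anti₀ (by positivity)
          exact_mod_cast add_le_add_left (Nat.cast_le.2 hmn) 1
        nlinarith [sq_nonneg ‖w‖])
      (by
        filter_upwards with w
        have h1 : Tendsto (fun n : ℕ => -((n:ℝ)+1)⁻¹ * ‖w‖ ^ 2) atTop (𝓝 0) := by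
          have : Tendsto (fun n : ℕ => ((n:ℝ)+1)⁻¹) atTop (𝓝 0) :=
            tendsto_inv_atTop_zero.comp (tendsto_atTop_add_const_right _ 1
              tendsto_natCast_atTop_atTop)
          simpa using (this.neg.mul_const (‖w‖ ^ 2))
        have h2 : Tendsto (fun n : ℕ => Real.exp (-((n:ℝ)+1)⁻¹ * ‖w‖ ^ 2) * ‖𝓕 f w‖ ^ 2)
            atTop (𝓝 (‖𝓕 f w‖ ^ 2)) := by
          have := (Real.continuous_exp.tendsto 0).comp h1
          simpa using this.mul_const (‖𝓕 f w‖ ^ 2)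
        exact (ENNReal.continuous_ofReal.tendsto _).comp h2)
    have heqn : ∀ n : ℕ, (∫⁻ w : V, ENNReal.ofReal
        (Real.exp (-((n:ℝ)+1)⁻¹ * ‖w‖ ^ 2) * ‖𝓕 f w‖ ^ 2)) = ENNReal.ofReal (I ((n:ℝ)+1)) := by
      intro n
      rw [← ofReal_integral_eq_lintegral_ofReal (hexp_int _ (by positivity))]
      filter_upwards with w
      positivity
    simp_rw [heqn] at hmc
    have hlim2 : Tendsto (fun n : ℕ => ENNReal.ofReal (I ((n:ℝ)+1))) atTop
        (𝓝 (ENNReal.ofReal (k 0).re)) := by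
      apply (ENNReal.continuous_ofReal.tendsto _).comp
      exact hIlim'.comp (tendsto_atTop_add_const_right _ 1 tendsto_natCast_atTop_atTop)
    exact tendsto_nhds_unique hmc hlim2
  refine ⟨(hGc.norm.pow 2).aestronglyMeasurable, ?_⟩
  rw [hasFiniteIntegral_iff_ofReal (by filter_upwards with w; positivity)]
  rw [key]
  exact ENNReal.ofReal_lt_top

lemma parseval_integrable {f g : V → ℂ} (hfc : Continuous f) (hfs : HasCompactSupport f)
    (hgc : Continuous g) (hgs : HasCompactSupport g) :
    Integrable (fun w : V => 𝓕 f w * (starRingEnd ℂ) (𝓕 g w)) := by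
  have hfi : Integrable f := hfc.integrable_of_hasCompactSupport hfs
  have hgi : Integrable g := hgc.integrable_of_hasCompactSupport hgs
  apply ((integrable_norm_sq_fourier hfc hfs).add (integrable_norm_sq_fourier hgc hgs)).mono'
  · exact ((fourier_continuous hfi).mul
      (Complex.continuous_conj.comp (fourier_continuous hgi))).aestronglyMeasurable
  · filter_upwards with w
    rw [norm_mul, RCLike.norm_conj]
    have h1 := norm_nonneg (𝓕 f w)
    have h2 := norm_nonneg (𝓕 g w)
    show ‖𝓕 f w‖ * ‖𝓕 g w‖ ≤ ‖𝓕 f w‖ ^ 2 + ‖𝓕 g w‖ ^ 2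
    nlinarith [sq_nonneg (‖𝓕 f w‖ - ‖𝓕 g w‖)]

lemma parseval_cc {f g : V → ℂ} (hfc : Continuous f) (hfs : HasCompactSupport f)
    (hgc : Continuous g) (hgs : HasCompactSupport g) :
    ∫ w : V, 𝓕 f w * (starRingEnd ℂ) (𝓕 g w) = ∫ x : V, f x * (starRingEnd ℂ) (g x) := by
  have hfi : Integrable f := hfc.integrable_of_hasCompactSupport hfs
  have hgi : Integrable g := hgc.integrable_of_hasCompactSupport hgs
  set gt : V → ℂ := fun y => (starRingEnd ℂ) (g (-y)) with hgt
  have hgtc : Continuous gt := Complex.continuous_conj.comp (hgc.comp continuous_neg)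
  have hgts : HasCompactSupport gt :=
    (hgs.comp_left (map_zero _)).comp_homeomorph (Homeomorph.neg V)
  have hgti : Integrable gt := hgtc.integrable_of_hasCompactSupport hgts
  set h := f ⋆[ContinuousLinearMap.mul ℂ ℂ] gt with hh
  have hhi : Integrable h := hfi.integrable_convolution _ hgti
  have hhc : Continuous h :=
    hgts.continuous_convolution_right _ hfi.locallyIntegrable hgtc
  have hFh : ∀ w, 𝓕 h w = 𝓕 f w * (starRingEnd ℂ) (𝓕 g w) := by
    intro w
    rw [hh, fourier_convolution hfi hgti hfc hgtc, ← fourier_conj]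
  have hP : Integrable (fun w : V => 𝓕 f w * (starRingEnd ℂ) (𝓕 g w)) :=
    parseval_integrable hfc hfs hgc hgs
  -- limit 1 : damped integrals tend to the full integral
  have lim1 : Tendsto (fun c : ℝ => ∫ w : V, cexp (-(c:ℂ)⁻¹ * ‖w‖ ^ 2) *
      (𝓕 f w * (starRingEnd ℂ) (𝓕 g w))) atTop
      (𝓝 (∫ w : V, 𝓕 f w * (starRingEnd ℂ) (𝓕 g w))) := by
    have := Real.tendsto_integral_cexp_sq_smul hP
    apply this.congr
    intro c
    congr 1 with w
    rw [smul_eq_mul]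
    norm_cast
  -- limit 2 : damped integrals tend to h 0
  have lim2 : Tendsto (fun c : ℝ => ∫ w : V, cexp (-(c:ℂ)⁻¹ * ‖w‖ ^ 2) *
      (𝓕 f w * (starRingEnd ℂ) (𝓕 g w))) atTop (𝓝 (h 0)) := by
    have main : Tendsto (fun c : ℝ => ∫ x : V, ((π * c : ℂ) ^ (Module.finrank ℝ V / 2 : ℂ) *
        cexp (-(π:ℂ) ^ 2 * c * ‖(0:V) - x‖ ^ 2)) • h x) atTop (𝓝 (h 0)) :=
      Real.tendsto_integral_gaussian_smul' hhi hhc.continuousAt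
    apply main.congr'
    filter_upwards [Ioi_mem_atTop 0] with c (hc : 0 < c)
    rw [← damped_eq hhi hc]
    congr 1 with w
    rw [hFh w]
  have := tendsto_nhds_unique lim1 lim2
  rw [this]
  rw [hh, convolution_def]
  congr 1 with t
  simp [ContinuousLinearMap.mul_apply', hgt, zero_sub, neg_neg]

lemma gabor_inner_eq {d : ℕ} (F : EuclideanSpace ℝ (Fin d) → ℂ) (w : EuclideanSpace ℝ (Fin d)) :
    (∫ y : EuclideanSpace ℝ (Fin d), F y * Complex.exp (-(2 * π * Complex.I) * (⟪w, y⟫ : ℝ))) =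
      𝓕 F w := by
  rw [Real.fourier_eq']
  congr 1 with y
  rw [smul_eq_mul, mul_comm]
  congr 1
  rw [real_inner_comm]
  push_cast
  ring_nf

section Euclid

variable {d : ℕ}

lemma gabor_step1 (f g ψ φ : EuclideanSpace ℝ (Fin d) → ℂ)
    (hf_cont : Continuous f) (hf_supp : HasCompactSupport f)
    (hg_cont : Continuous g) (hg_supp : HasCompactSupport g)
    (hψ_cont : Continuous ψ)
    (hφ_cont : Continuous φ) (x : EuclideanSpace ℝ (Fin d)) :
    (∫ w : EuclideanSpace ℝ (Fin d),
      (∫ y : EuclideanSpace ℝ (Fin d), f y * (starRingEnd ℂ) (ψ (y - x)) *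
          Complex.exp (-(2 * Real.pi * Complex.I) * (⟪w, y⟫ : ℝ))) *
        (starRingEnd ℂ) (∫ y : EuclideanSpace ℝ (Fin d),
            g y * (starRingEnd ℂ) (φ (y - x)) *
              Complex.exp (-(2 * Real.pi * Complex.I) * (⟪w, y⟫ : ℝ)))) =
      ∫ y : EuclideanSpace ℝ (Fin d), (f y * (starRingEnd ℂ) (g y)) *
        (φ (y - x) * (starRingEnd ℂ) (ψ (y - x))) := by
  have hFxc : Continuous (fun y : EuclideanSpace ℝ (Fin d) =>
      f y * (starRingEnd ℂ) (ψ (y - x))) :=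
    hf_cont.mul (Complex.continuous_conj.comp (hψ_cont.comp (continuous_sub_right x)))
  have hGxc : Continuous (fun y : EuclideanSpace ℝ (Fin d) =>
      g y * (starRingEnd ℂ) (φ (y - x))) :=
    hg_cont.mul (Complex.continuous_conj.comp (hφ_cont.comp (continuous_sub_right x)))
  have hFxs : HasCompactSupport (fun y : EuclideanSpace ℝ (Fin d) =>
      f y * (starRingEnd ℂ) (ψ (y - x))) :=
    HasCompactSupport.mul_right (f' := fun y => (starRingEnd ℂ) (ψ (y - x))) hf_supp
  have hGxs : HasCompactSupport (fun y : EuclideanSpace ℝ (Fin d) =>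
      g y * (starRingEnd ℂ) (φ (y - x))) :=
    HasCompactSupport.mul_right (f' := fun y => (starRingEnd ℂ) (φ (y - x))) hg_supp
  calc (∫ w : EuclideanSpace ℝ (Fin d),
      (∫ y : EuclideanSpace ℝ (Fin d), f y * (starRingEnd ℂ) (ψ (y - x)) *
          Complex.exp (-(2 * Real.pi * Complex.I) * (⟪w, y⟫ : ℝ))) *
        (starRingEnd ℂ) (∫ y : EuclideanSpace ℝ (Fin d),
            g y * (starRingEnd ℂ) (φ (y - x)) *
              Complex.exp (-(2 * Real.pi * Complex.I) * (⟪w, y⟫ : ℝ))))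
      = ∫ w : EuclideanSpace ℝ (Fin d),
          𝓕 (fun y => f y * (starRingEnd ℂ) (ψ (y - x))) w *
            (starRingEnd ℂ) (𝓕 (fun y => g y * (starRingEnd ℂ) (φ (y - x))) w) := by
        congr 1 with w
        rw [gabor_inner_eq (fun y => f y * (starRingEnd ℂ) (ψ (y - x))) w,
          gabor_inner_eq (fun y => g y * (starRingEnd ℂ) (φ (y - x))) w]
    _ = ∫ y : EuclideanSpace ℝ (Fin d),
          (f y * (starRingEnd ℂ) (ψ (y - x))) *
            (starRingEnd ℂ) (g y * (starRingEnd ℂ) (φ (y - x))) :=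
        parseval_cc hFxc hFxs hGxc hGxs
    _ = ∫ y : EuclideanSpace ℝ (Fin d), (f y * (starRingEnd ℂ) (g y)) *
          (φ (y - x) * (starRingEnd ℂ) (ψ (y - x))) := by
        congr 1 with y
        simp only [map_mul, Complex.conj_conj]
        ring

end Euclid

end Aux

/-- For continuous compactly supported `f, g, ψ, φ : ℝ^d → ℂ`, the
continuous Gabor transforms satisfy the orthogonality relation
`∫∫ 𝒢_ψf(x,w)·conj(𝒢_φg(x,w)) dw dx = ⟨φ,ψ⟩·⟨f,g⟩`. -/
theorem gabor_orthogonality_euclidean {d : ℕ}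
    (f g ψ φ : EuclideanSpace ℝ (Fin d) → ℂ)
    (hf_cont : Continuous f) (hf_supp : HasCompactSupport f)
    (hg_cont : Continuous g) (hg_supp : HasCompactSupport g)
    (hψ_cont : Continuous ψ) (hψ_supp : HasCompactSupport ψ)
    (hφ_cont : Continuous φ) (hφ_supp : HasCompactSupport φ) :
    ∫ x : EuclideanSpace ℝ (Fin d), ∫ w : EuclideanSpace ℝ (Fin d),
        (∫ y : EuclideanSpace ℝ (Fin d),
            f y * (starRingEnd ℂ) (ψ (y - x)) *
              Complex.exp (-(2 * Real.pi * Complex.I) * (⟪w, y⟫ : ℝ))) *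
          (starRingEnd ℂ) (∫ y : EuclideanSpace ℝ (Fin d),
            g y * (starRingEnd ℂ) (φ (y - x)) *
              Complex.exp (-(2 * Real.pi * Complex.I) * (⟪w, y⟫ : ℝ))) =
      (∫ y : EuclideanSpace ℝ (Fin d), φ y * (starRingEnd ℂ) (ψ y)) *
        (∫ y : EuclideanSpace ℝ (Fin d), f y * (starRingEnd ℂ) (g y)) := by
  have step1 := gabor_step1 f g ψ φ hf_cont hf_supp hg_cont hg_supp hψ_cont hφ_cont
  rw [integral_congr_ae (Filter.Eventually.of_forall step1)]
  -- Fubini for the (x, y) integral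
  have hHc : Continuous (fun p : EuclideanSpace ℝ (Fin d) × EuclideanSpace ℝ (Fin d) =>
      (f p.2 * (starRingEnd ℂ) (g p.2)) *
        (φ (p.2 - p.1) * (starRingEnd ℂ) (ψ (p.2 - p.1)))) := by
    have hsub : Continuous (fun p : EuclideanSpace ℝ (Fin d) × EuclideanSpace ℝ (Fin d) =>
        p.2 - p.1) := continuous_snd.sub continuous_fst
    exact ((hf_cont.comp continuous_snd).mul
        (Complex.continuous_conj.comp (hg_cont.comp continuous_snd))).mul
      ((hφ_cont.comp hsub).mul (Complex.continuous_conj.comp (hψ_cont.comp hsub)))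
  have hHs : HasCompactSupport (fun p : EuclideanSpace ℝ (Fin d) × EuclideanSpace ℝ (Fin d) =>
      (f p.2 * (starRingEnd ℂ) (g p.2)) *
        (φ (p.2 - p.1) * (starRingEnd ℂ) (ψ (p.2 - p.1)))) := by
    apply HasCompactSupport.intro
      ((hf_supp.isCompact.add hφ_supp.isCompact.neg).prod hf_supp.isCompact :
        IsCompact ((tsupport f + -tsupport φ) ×ˢ tsupport f))
    intro p hp
    by_contra hne
    apply hp
    have hf0 : f p.2 ≠ 0 := by
      intro h0; apply hne; simp [h0]
    have hφ0 : φ (p.2 - p.1) ≠ 0 := by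
      intro h0; apply hne; simp [h0]
    refine Set.mem_prod.2 ⟨?_, ?_⟩
    · have h1 : p.2 ∈ tsupport f := subset_tsupport f hf0
      have h2 : p.2 - p.1 ∈ tsupport φ := subset_tsupport φ hφ0
      have : p.1 = p.2 + -(p.2 - p.1) := by abel
      rw [this]
      exact Set.add_mem_add h1 (Set.neg_mem_neg.2 h2)
    · exact subset_tsupport f hf0
  have hHi : Integrable (fun p : EuclideanSpace ℝ (Fin d) × EuclideanSpace ℝ (Fin d) =>
      (f p.2 * (starRingEnd ℂ) (g p.2)) *
        (φ (p.2 - p.1) * (starRingEnd ℂ) (ψ (p.2 - p.1)))) :=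
    hHc.integrable_of_hasCompactSupport hHs
  rw [integral_integral_swap hHi]
  have inner_eq : ∀ y : EuclideanSpace ℝ (Fin d),
      (∫ x : EuclideanSpace ℝ (Fin d), (f y * (starRingEnd ℂ) (g y)) *
        (φ (y - x) * (starRingEnd ℂ) (ψ (y - x)))) =
      (f y * (starRingEnd ℂ) (g y)) *
        ∫ x : EuclideanSpace ℝ (Fin d), φ x * (starRingEnd ℂ) (ψ x) := by
    intro y
    rw [integral_const_mul]
    congr 1
    exact integral_sub_left_eq_self (fun x => φ x * (starRingEnd ℂ) (ψ x)) volume y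
  rw [integral_congr_ae (Filter.Eventually.of_forall inner_eq), integral_mul_const]
  rw [mul_comm]
end

section
/- Let f, ψ, φ be Schwartz functions ℝ^d → ℂ with ⟨φ,ψ⟩ = ∫_{ℝ^d} φ(y)·conj(ψ(y)) dy ≠ 0. Then for every t ∈ ℝ^d the inversion formula holds: f(t) = ⟨φ,ψ⟩⁻¹ · ∫_{ℝ^d} ∫_{ℝ^d} 𝒢_ψf(x,w) · e^{2πi w·t} · φ(t−x) dw dx, where 𝒢_ψf(x,w) = ∫_{ℝ^d} f(y)·conj(ψ(y−x))·e^{−2πi w·y} dy. -/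
open MeasureTheory
open scoped RealInnerProductSpace SchwartzMap FourierTransform

noncomputable section

variable {d : ℕ}

local notation "E" => EuclideanSpace ℝ (Fin d)

/-- Every Schwartz function has temperate growth. -/
lemma schwartz_hasTemperateGrowth {F : Type*} [NormedAddCommGroup F] [NormedSpace ℝ F]
    (f : 𝓢(EuclideanSpace ℝ (Fin d), F)) : Function.HasTemperateGrowth (⇑f) := by
  refine ⟨f.smooth ⊤, fun n => ?_⟩
  obtain ⟨C, -, hC⟩ := f.decay 0 n
  exact ⟨0, C, fun x => by simpa using hC x⟩

lemma sub_const_hasTemperateGrowth (x : EuclideanSpace ℝ (Fin d)) :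
    Function.HasTemperateGrowth (fun y : EuclideanSpace ℝ (Fin d) => y - x) := by
  apply Function.HasTemperateGrowth.of_fderiv (k := 1) (C := 1 + ‖x‖)
  · have h : (fderiv ℝ (fun y : EuclideanSpace ℝ (Fin d) => y - x)) =
        fun _ => ContinuousLinearMap.id ℝ (EuclideanSpace ℝ (Fin d)) := by
      funext y
      rw [fderiv_sub_const, fderiv_id']
    rw [h]
    exact Function.HasTemperateGrowth.const _
  · exact differentiable_id.sub_const x
  · intro y
    have : ‖y - x‖ ≤ ‖y‖ + ‖x‖ := norm_sub_le _ _
    have h1 : (0:ℝ) ≤ ‖y‖ := norm_nonneg _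
    have h2 : (0:ℝ) ≤ ‖x‖ := norm_nonneg _
    nlinarith

/-- Conjugation of a Schwartz function is Schwartz. -/
def conjSchwartz (f : 𝓢(EuclideanSpace ℝ (Fin d), ℂ)) : 𝓢(EuclideanSpace ℝ (Fin d), ℂ) where
  toFun y := (starRingEnd ℂ) (f y)
  smooth' := Complex.conjLIE.toLinearIsometry.contDiff.comp (f.smooth ⊤)
  decay' := by
    intro k n
    obtain ⟨C, -, hC⟩ := f.decay k n
    refine ⟨C, fun y => ?_⟩
    have : (fun y => (starRingEnd ℂ) (f y)) = Complex.conjLIE ∘ ⇑f := rfl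
    rw [this, Complex.conjLIE.norm_iteratedFDeriv_comp_left]
    exact hC y

/-- Let `f, ψ, φ` be Schwartz functions `ℝ^d → ℂ` with
`⟨φ,ψ⟩ = ∫ φ(y)·conj(ψ(y)) dy ≠ 0`. Then for every `t ∈ ℝ^d` the inversion formula holds:
`f(t) = ⟨φ,ψ⟩⁻¹ · ∫∫ 𝒢_ψf(x,w)·e^{2πi w·t}·φ(t−x) dw dx`. -/
theorem gabor_inversion_euclidean {d : ℕ}
    (f ψ φ : 𝓢(EuclideanSpace ℝ (Fin d), ℂ))
    (hne : (∫ y : EuclideanSpace ℝ (Fin d), φ y * (starRingEnd ℂ) (ψ y)) ≠ 0)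
    (t : EuclideanSpace ℝ (Fin d)) :
    f t = (∫ y : EuclideanSpace ℝ (Fin d), φ y * (starRingEnd ℂ) (ψ y))⁻¹ *
      ∫ x : EuclideanSpace ℝ (Fin d), ∫ w : EuclideanSpace ℝ (Fin d),
        (∫ y : EuclideanSpace ℝ (Fin d),
            f y * (starRingEnd ℂ) (ψ (y - x)) *
              Complex.exp (-(2 * Real.pi * Complex.I) * (⟪w, y⟫ : ℝ))) *
          Complex.exp ((2 * Real.pi * Complex.I) * (⟪w, t⟫ : ℝ)) * φ (t - x) := by
  classical
  set c : ℂ := ∫ y : EuclideanSpace ℝ (Fin d), φ y * (starRingEnd ℂ) (ψ y) with hc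
  -- for each x, build the Schwartz function y ↦ f y * conj (ψ (y - x))
  have halip : ∀ x : EuclideanSpace ℝ (Fin d),
      AntilipschitzWith 1 (fun y : EuclideanSpace ℝ (Fin d) => y - x) := fun x =>
    (IsometryEquiv.subRight x).isometry.antilipschitz
  -- the translated conjugated Schwartz function
  let ψx : EuclideanSpace ℝ (Fin d) → 𝓢(EuclideanSpace ℝ (Fin d), ℂ) := fun x =>
    SchwartzMap.compCLMOfAntilipschitz ℝ (sub_const_hasTemperateGrowth x) (halip x)
      (conjSchwartz ψ)
  have hψx : ∀ x y, ψx x y = (starRingEnd ℂ) (ψ (y - x)) := fun x y => rfl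
  let g : EuclideanSpace ℝ (Fin d) → 𝓢(EuclideanSpace ℝ (Fin d), ℂ) := fun x =>
    SchwartzMap.bilinLeftCLM (ContinuousLinearMap.mul ℝ ℂ)
      (schwartz_hasTemperateGrowth (ψx x)) f
  have hg : ∀ x y, g x y = f y * (starRingEnd ℂ) (ψ (y - x)) := fun x y => rfl
  -- Step 1: inner-most integral is the Fourier transform of g x
  have step1 : ∀ x w, (∫ y : EuclideanSpace ℝ (Fin d),
      f y * (starRingEnd ℂ) (ψ (y - x)) *
        Complex.exp (-(2 * Real.pi * Complex.I) * (⟪w, y⟫ : ℝ))) = 𝓕 (⇑(g x)) w := by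
    intro x w
    rw [Real.fourier_eq']
    congr 1
    funext y
    rw [smul_eq_mul, hg, mul_comm]
    congr 1
    rw [real_inner_comm]
    push_cast
    ring
  -- Step 2: Fourier inversion
  have step2 : ∀ x, (∫ w : EuclideanSpace ℝ (Fin d),
      𝓕 (⇑(g x)) w * Complex.exp ((2 * Real.pi * Complex.I) * (⟪w, t⟫ : ℝ))) = g x t := by
    intro x
    have hinv : 𝓕⁻ (𝓕 ⇑(g x)) t = g x t := by
      rw [(g x).continuous.fourierInv_fourier_eq (g x).integrable
        ((SchwartzMap.fourierTransformCLM ℝ (g x)).integrable)]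
    rw [← hinv, Real.fourierInv_eq']
    congr 1
    funext w
    rw [smul_eq_mul, mul_comm]
    congr 1
    push_cast
    ring
  -- rewrite the double integral
  have key : (∫ x : EuclideanSpace ℝ (Fin d), ∫ w : EuclideanSpace ℝ (Fin d),
      (∫ y : EuclideanSpace ℝ (Fin d),
          f y * (starRingEnd ℂ) (ψ (y - x)) *
            Complex.exp (-(2 * Real.pi * Complex.I) * (⟪w, y⟫ : ℝ))) *
        Complex.exp ((2 * Real.pi * Complex.I) * (⟪w, t⟫ : ℝ)) * φ (t - x)) =
      f t * c := by
    have hx : ∀ x : EuclideanSpace ℝ (Fin d), (∫ w : EuclideanSpace ℝ (Fin d),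
        (∫ y : EuclideanSpace ℝ (Fin d),
            f y * (starRingEnd ℂ) (ψ (y - x)) *
              Complex.exp (-(2 * Real.pi * Complex.I) * (⟪w, y⟫ : ℝ))) *
          Complex.exp ((2 * Real.pi * Complex.I) * (⟪w, t⟫ : ℝ)) * φ (t - x)) =
        f t * ((starRingEnd ℂ) (ψ (t - x)) * φ (t - x)) := by
      intro x
      rw [integral_mul_const]
      have : (∫ w : EuclideanSpace ℝ (Fin d),
          (∫ y : EuclideanSpace ℝ (Fin d),
              f y * (starRingEnd ℂ) (ψ (y - x)) *
                Complex.exp (-(2 * Real.pi * Complex.I) * (⟪w, y⟫ : ℝ))) *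
            Complex.exp ((2 * Real.pi * Complex.I) * (⟪w, t⟫ : ℝ))) = g x t := by
        rw [← step2 x]
        congr 1
        funext w
        rw [step1 x w]
      rw [this, hg, mul_assoc]
    rw [integral_congr_ae (Filter.Eventually.of_forall hx)]
    rw [integral_const_mul]
    congr 1
    have : (∫ x : EuclideanSpace ℝ (Fin d),
        (starRingEnd ℂ) (ψ (t - x)) * φ (t - x)) =
        ∫ x : EuclideanSpace ℝ (Fin d), (starRingEnd ℂ) (ψ x) * φ x := by
      exact integral_sub_left_eq_self
        (fun u : EuclideanSpace ℝ (Fin d) => (starRingEnd ℂ) (ψ u) * φ u) volume t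
    rw [this, hc]
    exact integral_congr_ae (Filter.Eventually.of_forall fun y => mul_comm _ _)
  rw [key, mul_comm (f t) c, ← mul_assoc, inv_mul_cancel₀ hne, one_mul]
end
end
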